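/- arXiv:2502.08935 — 2 statements merged into one kernel-verified Lean document; each statement's English description precedes it below -/
import Mathlib

section
/- Let T, δ, K₀, λ > 0. Suppose P, Π : [0,T] → (symmetric n×n real matrices) and symmetric n×n real matrices P∞, Π∞ satisfy, for all t ∈ [0,T]: ‖P(t) − P∞‖ ≤ K₀ e^{−λ(T−t)}, ‖Π(t) − Π∞‖ ≤ K₀ e^{−λ(T−t)}, R + DᵀP(t)D ⪰ δI_m, and R + DᵀP∞D ⪰ δI_m. Define Θ̄_T(t) = −(R + DᵀP(t)D)⁻¹(BᵀΠ(t) + DᵀP(t)(C + C̄) + S) and Θ̄∞ = −(R + DᵀP∞D)⁻¹(BᵀΠ∞ + DᵀP∞(C + C̄) + S). Then there exists a constant K > 0, depending only on B, C, C̄, D, S, R, δ, K₀, ‖P∞‖ and ‖Π∞‖ but not on T, such that ‖Θ̄_T(t) − Θ̄∞‖ ≤ K e^{−λ(T−t)} for all t ∈ [0,T]. -/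
open Matrix

attribute [local instance] Matrix.frobeniusSeminormedAddCommGroup Matrix.frobeniusNormedAddCommGroup

/-- Frobenius norm of a real matrix. -/
noncomputable def frobNorm {k l : ℕ} (M : Matrix (Fin k) (Fin l) ℝ) : ℝ :=
  Real.sqrt (∑ i, ∑ j, (M i j) ^ 2)

lemma frobNorm_eq {k l : ℕ} (M : Matrix (Fin k) (Fin l) ℝ) : frobNorm M = ‖M‖ := by
  rw [frobNorm, Matrix.frobenius_norm_def, Real.sqrt_eq_rpow]
  congr 1
  refine Finset.sum_congr rfl fun i _ => Finset.sum_congr rfl fun j _ => ?_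
  rw [show ((2:ℝ)) = ((2:ℕ):ℝ) by norm_num, Real.rpow_natCast, Real.norm_eq_abs, sq_abs]

section inv

variable {m : ℕ} {A : Matrix (Fin m) (Fin m) ℝ} {δ : ℝ}

lemma coerc (hA : (A - δ • (1 : Matrix (Fin m) (Fin m) ℝ)).PosSemidef)
    (x : Fin m → ℝ) : δ * (x ⬝ᵥ x) ≤ x ⬝ᵥ A *ᵥ x := by
  have h := hA.dotProduct_mulVec_nonneg x
  simp only [star_trivial, sub_mulVec, dotProduct_sub, smul_mulVec, one_mulVec,
    dotProduct_smul, smul_eq_mul, sub_nonneg] at h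
  exact h

lemma posDef_of_coerc (hδ : 0 < δ)
    (hA : (A - δ • (1 : Matrix (Fin m) (Fin m) ℝ)).PosSemidef) : A.PosDef := by
  refine posDef_iff_dotProduct_mulVec.mpr ⟨?_, ?_⟩
  · have h1 : (A - δ • (1 : Matrix (Fin m) (Fin m) ℝ)).IsHermitian := hA.1
    have h2 : (δ • (1 : Matrix (Fin m) (Fin m) ℝ)).IsHermitian := by
      simp [Matrix.IsHermitian]
    have := h1.add h2
    simpa using this
  · intro x hx
    have hxx : 0 < x ⬝ᵥ x := by
      obtain ⟨i, hi⟩ := Function.ne_iff.mp hx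
      rw [dotProduct]
      exact Finset.sum_pos' (fun j _ => mul_self_nonneg _)
        ⟨i, Finset.mem_univ i, mul_self_pos.mpr hi⟩
    have := coerc hA x
    simp only [star_trivial]
    nlinarith

lemma inv_norm_le (hδ : 0 < δ)
    (hA : (A - δ • (1 : Matrix (Fin m) (Fin m) ℝ)).PosSemidef) :
    ‖A⁻¹‖ ≤ Real.sqrt m / δ := by
  have hpd := posDef_of_coerc hδ hA
  have hdet : IsUnit A.det := hpd.det_pos.ne'.isUnit
  have hmul : A * A⁻¹ = 1 := Matrix.mul_nonsing_inv A hdet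
  -- column bound
  have hcol : ∀ j, ∑ i, (A⁻¹ i j) ^ 2 ≤ (1 / δ) ^ 2 := by
    intro j
    set x : Fin m → ℝ := fun i => A⁻¹ i j with hxdef
    have hAx : A *ᵥ x = fun i => (1 : Matrix (Fin m) (Fin m) ℝ) i j := by
      funext i
      have : (A * A⁻¹) i j = (1 : Matrix (Fin m) (Fin m) ℝ) i j := by rw [hmul]
      simpa [Matrix.mul_apply, Matrix.mulVec, dotProduct, hxdef] using this
    have hform : x ⬝ᵥ A *ᵥ x = x j := by
      rw [hAx, dotProduct]
      simp [Matrix.one_apply]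
    have hc := coerc hA x
    rw [hform] at hc
    have hs : x ⬝ᵥ x = ∑ i, (x i) ^ 2 := by simp [dotProduct, sq]
    set s : ℝ := ∑ i, (x i) ^ 2 with hsdef
    have hs0 : 0 ≤ s := Finset.sum_nonneg fun i _ => sq_nonneg _
    have hxj : (x j) ^ 2 ≤ s := Finset.single_le_sum (fun i _ => sq_nonneg (x i)) (Finset.mem_univ j)
    rw [hs] at hc
    -- δ * s ≤ x j, (x j)^2 ≤ s ⇒ s ≤ (1/δ)^2
    have hδs : 0 ≤ δ * s := by positivity
    have h2 : (δ * s) ^ 2 ≤ (x j) ^ 2 := by nlinarith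
    have h3 : δ ^ 2 * s ^ 2 ≤ s := by nlinarith
    rw [div_pow, one_pow, le_div_iff₀ (by positivity)]
    nlinarith
  have : ‖A⁻¹‖ = Real.sqrt (∑ i, ∑ j, (A⁻¹ i j) ^ 2) := (frobNorm_eq _).symm
  rw [this, Finset.sum_comm]
  have hle : ∑ j, ∑ i, (A⁻¹ i j) ^ 2 ≤ (m : ℝ) * (1 / δ) ^ 2 := by
    calc ∑ j, ∑ i, (A⁻¹ i j) ^ 2 ≤ ∑ _j : Fin m, (1 / δ) ^ 2 :=
          Finset.sum_le_sum fun j _ => hcol j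
      _ = (m : ℝ) * (1 / δ) ^ 2 := by simp [mul_comm]
  calc Real.sqrt (∑ j, ∑ i, (A⁻¹ i j) ^ 2) ≤ Real.sqrt ((m : ℝ) * (1 / δ) ^ 2) :=
        Real.sqrt_le_sqrt hle
    _ = Real.sqrt m / δ := by
        rw [Real.sqrt_mul (Nat.cast_nonneg m), Real.sqrt_sq_eq_abs]
        rw [abs_of_pos (by positivity)]
        ring

end inv

/-- exponential convergence of `P(t)` to `P∞` and of `Π(t)` to `Π∞`,
together with uniform coercivity of `R + DᵀP(t)D` and `R + DᵀP∞D`, implies exponential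
convergence of the mean-field feedback gains `Θ̄_T(t)` to `Θ̄∞`, with a constant
independent of `T`. -/
theorem mean_field_feedback_gain_convergence {n m : ℕ} (hn : 0 < n) (hm : 0 < m)
    (B D : Matrix (Fin n) (Fin m) ℝ) (C Cbar : Matrix (Fin n) (Fin n) ℝ)
    (S : Matrix (Fin m) (Fin n) ℝ) (R : Matrix (Fin m) (Fin m) ℝ) (hR : R.IsSymm)
    (δ K₀ lam : ℝ) (hδ : 0 < δ) (hK₀ : 0 < K₀) (hlam : 0 < lam)
    (Pinf Piinf : Matrix (Fin n) (Fin n) ℝ)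
    (hPinf : Pinf.IsSymm) (hPiinf : Piinf.IsSymm)
    (hRinf : ((R + Dᵀ * Pinf * D) - δ • (1 : Matrix (Fin m) (Fin m) ℝ)).PosSemidef) :
    ∃ K > (0:ℝ), ∀ T : ℝ, 0 < T → ∀ P Pi0 : ℝ → Matrix (Fin n) (Fin n) ℝ,
      (∀ t ∈ Set.Icc (0:ℝ) T, (P t).IsSymm) →
      (∀ t ∈ Set.Icc (0:ℝ) T, (Pi0 t).IsSymm) →
      (∀ t ∈ Set.Icc (0:ℝ) T, frobNorm (P t - Pinf) ≤ K₀ * Real.exp (-lam * (T - t))) →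
      (∀ t ∈ Set.Icc (0:ℝ) T,
        frobNorm (Pi0 t - Piinf) ≤ K₀ * Real.exp (-lam * (T - t))) →
      (∀ t ∈ Set.Icc (0:ℝ) T,
        ((R + Dᵀ * P t * D) - δ • (1 : Matrix (Fin m) (Fin m) ℝ)).PosSemidef) →
      ∀ t ∈ Set.Icc (0:ℝ) T,
        frobNorm (-((R + Dᵀ * P t * D)⁻¹ * (Bᵀ * Pi0 t + Dᵀ * P t * (C + Cbar) + S))
            - -((R + Dᵀ * Pinf * D)⁻¹ * (Bᵀ * Piinf + Dᵀ * Pinf * (C + Cbar) + S)))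
          ≤ K * Real.exp (-lam * (T - t)) := by
  set a : ℝ := Real.sqrt m / δ with ha_def
  have ha : 0 < a := by
    apply div_pos _ hδ
    exact Real.sqrt_pos.mpr (by exact_mod_cast hm)
  set A2 : Matrix (Fin m) (Fin m) ℝ := R + Dᵀ * Pinf * D with hA2def
  set M2 : Matrix (Fin m) (Fin n) ℝ := Bᵀ * Piinf + Dᵀ * Pinf * (C + Cbar) + S with hM2def
  have hcst : (0:ℝ) ≤ a * (‖Bᵀ‖ + ‖Dᵀ‖ * ‖C + Cbar‖) + a * a * (‖Dᵀ‖ * ‖D‖) * ‖M2‖ :=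
    add_nonneg (mul_nonneg ha.le (by positivity))
      (mul_nonneg (mul_nonneg (mul_nonneg ha.le ha.le) (by positivity)) (norm_nonneg _))
  refine ⟨K₀ * (a * (‖Bᵀ‖ + ‖Dᵀ‖ * ‖C + Cbar‖) + a * a * (‖Dᵀ‖ * ‖D‖) * ‖M2‖) + 1,
    by nlinarith, ?_⟩
  intro T hT P Pi0 hPsym hPisym hPconv hPiconv hcoerc t ht
  set e : ℝ := Real.exp (-lam * (T - t)) with hedef
  have he : 0 < e := Real.exp_pos _
  set ε : ℝ := K₀ * e with hεdef
  have hε : 0 < ε := by positivity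
  set A1 : Matrix (Fin m) (Fin m) ℝ := R + Dᵀ * P t * D with hA1def
  set M1 : Matrix (Fin m) (Fin n) ℝ := Bᵀ * Pi0 t + Dᵀ * P t * (C + Cbar) + S with hM1def
  have hA1c := hcoerc t ht
  have hpd1 := posDef_of_coerc hδ hA1c
  have hpd2 := posDef_of_coerc hδ hRinf
  have hinv1 : A1⁻¹ * A1 = 1 := Matrix.nonsing_inv_mul A1 hpd1.det_pos.ne'.isUnit
  have hinv2 : A2 * A2⁻¹ = 1 := Matrix.mul_nonsing_inv A2 hpd2.det_pos.ne'.isUnit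
  have hb1 : ‖A1⁻¹‖ ≤ a := inv_norm_le hδ hA1c
  have hb2 : ‖A2⁻¹‖ ≤ a := inv_norm_le hδ hRinf
  -- key algebraic identity
  have key : -(A1⁻¹ * M1) - -(A2⁻¹ * M2)
      = A1⁻¹ * (M2 - M1) + A1⁻¹ * ((A1 - A2) * (A2⁻¹ * M2)) := by
    have h2 : A1⁻¹ * ((A1 - A2) * (A2⁻¹ * M2)) = A2⁻¹ * M2 - A1⁻¹ * M2 := by
      rw [Matrix.sub_mul, Matrix.mul_sub, ← Matrix.mul_assoc A1⁻¹ A1 _, hinv1, Matrix.one_mul,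
        ← Matrix.mul_assoc A2 A2⁻¹ M2, hinv2, Matrix.one_mul]
    rw [h2, Matrix.mul_sub]
    abel
  -- difference bounds
  have hP' : ‖P t - Pinf‖ ≤ ε := by rw [← frobNorm_eq]; exact hPconv t ht
  have hPi' : ‖Pi0 t - Piinf‖ ≤ ε := by rw [← frobNorm_eq]; exact hPiconv t ht
  have hMdiff : M2 - M1 = Bᵀ * (Piinf - Pi0 t) + Dᵀ * (Pinf - P t) * (C + Cbar) := by
    rw [hM1def, hM2def]
    simp only [Matrix.mul_sub, Matrix.sub_mul]
    abel
  have hAdiff : A1 - A2 = Dᵀ * (P t - Pinf) * D := by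
    rw [hA1def, hA2def]
    simp only [Matrix.mul_sub, Matrix.sub_mul]
    abel
  have hMdn : ‖M2 - M1‖ ≤ ‖Bᵀ‖ * ε + ‖Dᵀ‖ * ε * ‖C + Cbar‖ := by
    rw [hMdiff]
    refine le_trans (norm_add_le _ _) (add_le_add ?_ ?_)
    · refine le_trans (Matrix.frobenius_norm_mul _ _) ?_
      have : ‖Piinf - Pi0 t‖ ≤ ε := by rw [norm_sub_rev]; exact hPi'
      exact mul_le_mul_of_nonneg_left this (norm_nonneg _)
    · refine le_trans (Matrix.frobenius_norm_mul _ _) ?_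
      refine mul_le_mul_of_nonneg_right ?_ (norm_nonneg _)
      refine le_trans (Matrix.frobenius_norm_mul _ _) ?_
      have : ‖Pinf - P t‖ ≤ ε := by rw [norm_sub_rev]; exact hP'
      exact mul_le_mul_of_nonneg_left this (norm_nonneg _)
  have hAdn : ‖A1 - A2‖ ≤ ‖Dᵀ‖ * ε * ‖D‖ := by
    rw [hAdiff]
    refine le_trans (Matrix.frobenius_norm_mul _ _) ?_
    refine mul_le_mul_of_nonneg_right ?_ (norm_nonneg _)
    refine le_trans (Matrix.frobenius_norm_mul _ _) ?_
    exact mul_le_mul_of_nonneg_left hP' (norm_nonneg _)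
  have hE : ‖-(A1⁻¹ * M1) - -(A2⁻¹ * M2)‖
      ≤ a * (‖Bᵀ‖ * ε + ‖Dᵀ‖ * ε * ‖C + Cbar‖) + a * ((‖Dᵀ‖ * ε * ‖D‖) * (a * ‖M2‖)) := by
    rw [key]
    refine le_trans (norm_add_le _ _) (add_le_add ?_ ?_)
    · refine le_trans (Matrix.frobenius_norm_mul _ _) ?_
      exact mul_le_mul hb1 hMdn (norm_nonneg _) ha.le
    · refine le_trans (Matrix.frobenius_norm_mul _ _) ?_
      refine mul_le_mul hb1 ?_ (norm_nonneg _) ha.le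
      refine le_trans (Matrix.frobenius_norm_mul _ _) ?_
      refine mul_le_mul hAdn ?_ (norm_nonneg _) (by positivity)
      refine le_trans (Matrix.frobenius_norm_mul _ _) ?_
      exact mul_le_mul_of_nonneg_right hb2 (norm_nonneg _)
  rw [frobNorm_eq]
  calc ‖-(A1⁻¹ * M1) - -(A2⁻¹ * M2)‖
      ≤ a * (‖Bᵀ‖ * ε + ‖Dᵀ‖ * ε * ‖C + Cbar‖) + a * ((‖Dᵀ‖ * ε * ‖D‖) * (a * ‖M2‖)) := hE
    _ ≤ (K₀ * (a * (‖Bᵀ‖ + ‖Dᵀ‖ * ‖C + Cbar‖) + a * a * (‖Dᵀ‖ * ‖D‖) * ‖M2‖) + 1) * e := by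
        rw [hεdef]
        nlinarith [he.le, ha.le]
end

section
/- Let T, K₀, λ₁, λ₂ > 0 with λ₁ ≠ λ₂. Suppose: (a) P, Π : [0,T] → (symmetric n×n real matrices) and Θ̄_T : [0,T] → ℝ^{m×n} are continuous with ‖P(t)‖ ≤ K₀ for all t; (b) symmetric n×n matrices P∞, Π∞ and a matrix Θ̄* ∈ ℝ^{m×n} are given with ‖P(t) − P∞‖ ≤ K₀ e^{−λ₁(T−t)}, ‖Π(t) − Π∞‖ ≤ K₀ e^{−λ₁(T−t)}, and ‖Θ̄_T(t) − Θ̄*‖ ≤ K₀ e^{−λ₁(T−t)} for all t ∈ [0,T]; (c) ‖exp(t(A + Ā + BΘ̄*)ᵀ)‖ ≤ K₀ e^{−λ₂ t} for all t ≥ 0; (d) p : [0,T] → ℝⁿ is differentiable with p′(t) + (A + Ā + BΘ̄_T(t))ᵀ p(t) + (C + C̄ + DΘ̄_T(t))ᵀ P(t) σ + Θ̄_T(t)ᵀ r + Π(t) b + q = 0 for all t ∈ [0,T], p(T) = 0, and |p(t)| ≤ K₀ for all t ∈ [0,T]; (e) p∞ ∈ ℝⁿ satisfies (A + Ā + BΘ̄*)ᵀ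 p∞ + (C + C̄ + DΘ̄*)ᵀ P∞ σ + (Θ̄*)ᵀ r + Π∞ b + q = 0. Then there exist constants K > 0 and λ ∈ (0, min{λ₁, λ₂}] depending only on the fixed matrices and vectors, K₀, λ₁, λ₂, |p∞| (and not on T) such that |p(t) − p∞| ≤ K e^{−λ(T−t)} for all t ∈ [0,T]. -/
open Matrix

/-- Euclidean norm of a vector in `ℝⁿ`. -/
noncomputable def eNorm {k : ℕ} (v : Fin k → ℝ) : ℝ :=
  Real.sqrt (∑ i, (v i) ^ 2)

/-- Matrix exponential of a real square matrix. -/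
noncomputable def matExp {k : ℕ} (M : Matrix (Fin k) (Fin k) ℝ) : Matrix (Fin k) (Fin k) ℝ :=
  NormedSpace.exp M

attribute [local instance] Matrix.linftyOpNormedRing Matrix.linftyOpNormedAlgebra

noncomputable def toEucL {k : ℕ} : (Fin k → ℝ) →L[ℝ] EuclideanSpace ℝ (Fin k) :=
  LinearMap.toContinuousLinearMap
    ((WithLp.linearEquiv 2 ℝ (Fin k → ℝ)).symm :
      (Fin k → ℝ) →ₗ[ℝ] EuclideanSpace ℝ (Fin k))

lemma toEucL_apply {k : ℕ} (v : Fin k → ℝ) (i : Fin k) : toEucL v i = v i := rfl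

lemma eNorm_eq {k : ℕ} (v : Fin k → ℝ) : eNorm v = ‖toEucL v‖ := by
  rw [EuclideanSpace.norm_eq]
  simp [eNorm, toEucL_apply, Real.norm_eq_abs, sq_abs]

lemma eNorm_nonneg {k : ℕ} (v : Fin k → ℝ) : 0 ≤ eNorm v := Real.sqrt_nonneg _

lemma frobNorm_nonneg {k l : ℕ} (M : Matrix (Fin k) (Fin l) ℝ) : 0 ≤ frobNorm M :=
  Real.sqrt_nonneg _

lemma eNorm_neg {k : ℕ} (v : Fin k → ℝ) : eNorm (-v) = eNorm v := by
  simp [eNorm]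

lemma frobNorm_neg {k l : ℕ} (M : Matrix (Fin k) (Fin l) ℝ) : frobNorm (-M) = frobNorm M := by
  simp [frobNorm]

lemma frobNorm_transpose {k l : ℕ} (M : Matrix (Fin k) (Fin l) ℝ) :
    frobNorm Mᵀ = frobNorm M := by
  rw [frobNorm, frobNorm, Finset.sum_comm]
  rfl

lemma eNorm_mulVec_le {k l : ℕ} (M : Matrix (Fin k) (Fin l) ℝ) (v : Fin l → ℝ) :
    eNorm (M.mulVec v) ≤ frobNorm M * eNorm v := by
  rw [eNorm, eNorm, frobNorm, ← Real.sqrt_mul (by positivity)]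
  apply Real.sqrt_le_sqrt
  rw [Finset.sum_mul]
  apply Finset.sum_le_sum
  intro i _
  calc (M.mulVec v i) ^ 2 = (∑ j, M i j * v j) ^ 2 := by rfl
    _ ≤ (∑ j, (M i j) ^ 2) * (∑ j, (v j) ^ 2) := Finset.sum_mul_sq_le_sq_mul_sq _ _ _

lemma frobNorm_mul_le {k l o : ℕ} (M : Matrix (Fin k) (Fin l) ℝ)
    (Nm : Matrix (Fin l) (Fin o) ℝ) :
    frobNorm (M * Nm) ≤ frobNorm M * frobNorm Nm := by
  rw [frobNorm, frobNorm, frobNorm, ← Real.sqrt_mul (by positivity)]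
  apply Real.sqrt_le_sqrt
  calc ∑ i, ∑ j, ((M * Nm) i j) ^ 2
      ≤ ∑ i, ∑ j, (∑ c, (M i c) ^ 2) * (∑ c, (Nm c j) ^ 2) := by
        apply Finset.sum_le_sum; intro i _
        apply Finset.sum_le_sum; intro j _
        rw [Matrix.mul_apply]
        exact Finset.sum_mul_sq_le_sq_mul_sq _ _ _
    _ = (∑ i, ∑ c, (M i c) ^ 2) * (∑ j, ∑ c, (Nm c j) ^ 2) :=
        (Finset.sum_mul_sum Finset.univ Finset.univ (fun i => ∑ c, (M i c) ^ 2) (fun j => ∑ c, (Nm c j) ^ 2)).symm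
    _ = (∑ i, ∑ c, (M i c) ^ 2) * (∑ c, ∑ j, (Nm c j) ^ 2) := by
        congr 1; exact Finset.sum_comm

noncomputable def mulVecL {k : ℕ} :
    Matrix (Fin k) (Fin k) ℝ →L[ℝ] (EuclideanSpace ℝ (Fin k) →L[ℝ] EuclideanSpace ℝ (Fin k)) :=
  LinearMap.toContinuousLinearMap
    ((LinearMap.toContinuousLinearMap :
        (EuclideanSpace ℝ (Fin k) →ₗ[ℝ] EuclideanSpace ℝ (Fin k)) ≃ₗ[ℝ]
          (EuclideanSpace ℝ (Fin k) →L[ℝ] EuclideanSpace ℝ (Fin k))).toLinearMap.comp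
      (Matrix.toEuclideanLin.toLinearMap :
        Matrix (Fin k) (Fin k) ℝ →ₗ[ℝ] (EuclideanSpace ℝ (Fin k) →ₗ[ℝ] EuclideanSpace ℝ (Fin k))))

lemma eq_toEucL {k : ℕ} (x : EuclideanSpace ℝ (Fin k)) : x = toEucL (fun i => x i) := rfl

lemma mulVecL_apply {k : ℕ} (M : Matrix (Fin k) (Fin k) ℝ) (v : Fin k → ℝ) :
    mulVecL M (toEucL v) = toEucL (M.mulVec v) := rfl

lemma mulVecL_mul {k : ℕ} (X Y : Matrix (Fin k) (Fin k) ℝ) (x : EuclideanSpace ℝ (Fin k)) :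
    mulVecL (X * Y) x = mulVecL X (mulVecL Y x) := by
  rw [eq_toEucL x, mulVecL_apply, mulVecL_apply, mulVecL_apply, Matrix.mulVec_mulVec]

lemma norm_mulVecL_le {k : ℕ} (M : Matrix (Fin k) (Fin k) ℝ) (x : EuclideanSpace ℝ (Fin k)) :
    ‖mulVecL M x‖ ≤ frobNorm M * ‖x‖ := by
  rw [eq_toEucL x, mulVecL_apply, ← eNorm_eq, ← eNorm_eq]
  exact eNorm_mulVec_le _ _

lemma expDeriv {k : ℕ} (N : Matrix (Fin k) (Fin k) ℝ) (T u : ℝ) :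
    HasDerivAt (fun s : ℝ => NormedSpace.exp ((s - T) • N))
      (NormedSpace.exp ((u - T) • N) * N) u := by
  have h1 : HasDerivAt (fun s : ℝ => s - T) 1 u := (hasDerivAt_id u).sub_const T
  have h2 := hasDerivAt_exp_smul_const (𝕂 := ℝ) N (u - T)
  have h3 : HasDerivAt ((fun s : ℝ => NormedSpace.exp (s • N)) ∘ (fun s : ℝ => s - T))
      ((1:ℝ) • (NormedSpace.exp ((u - T) • N) * N)) u := HasDerivAt.scomp u h2 h1
  simpa only [one_smul, Function.comp_def] using h3

lemma exp_shift {k : ℕ} (N : Matrix (Fin k) (Fin k) ℝ) (a c : ℝ) :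
    NormedSpace.exp (a • N) * NormedSpace.exp (c • N) = NormedSpace.exp ((a + c) • N) := by
  rw [add_smul]
  exact (Matrix.exp_add_of_commute (a • N) (c • N) (((Commute.refl N).smul_left a).smul_right c)).symm

lemma int_exp_left {d t T : ℝ} (hd : 0 < d) (h : t ≤ T) :
    ∫ u in t..T, Real.exp (-d * (u - t)) ≤ 1 / d := by
  have hanti : ∀ u ∈ Set.uIcc t T, HasDerivAt (fun u => -(Real.exp (-d * (u - t))) / d)
      (Real.exp (-d * (u - t))) u := by
    intro u _
    have h1 : HasDerivAt (fun u : ℝ => -d * (u - t)) (-d) u := by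
      simpa using ((hasDerivAt_id u).sub_const t).const_mul (-d)
    have h3 := (h1.exp.neg).div_const d
    convert h3 using 1
    rfl
    rfl
    rfl
    field_simp
  rw [intervalIntegral.integral_eq_sub_of_hasDerivAt hanti
    (Continuous.intervalIntegrable (by continuity) t T)]
  have h4 : 0 < Real.exp (-d * (T - t)) := Real.exp_pos _
  have h5 : Real.exp (-d * (t - t)) = 1 := by simp
  rw [h5]
  rw [div_sub_div_same, div_le_div_iff₀ hd hd]
  nlinarith

lemma int_exp_right {d t T : ℝ} (hd : 0 < d) (h : t ≤ T) :
    ∫ u in t..T, Real.exp (-d * (T - u)) ≤ 1 / d := by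
  have hanti : ∀ u ∈ Set.uIcc t T, HasDerivAt (fun u => Real.exp (-d * (T - u)) / d)
      (Real.exp (-d * (T - u))) u := by
    intro u _
    have h1 : HasDerivAt (fun u : ℝ => -d * (T - u)) d u := by
      simpa using ((hasDerivAt_id u).const_sub T).const_mul (-d)
    have h3 := h1.exp.div_const d
    convert h3 using 1
    rfl
    rfl
    field_simp
  rw [intervalIntegral.integral_eq_sub_of_hasDerivAt hanti
    (Continuous.intervalIntegrable (by continuity) t T)]
  have h4 : 0 < Real.exp (-d * (T - t)) := Real.exp_pos _
  have h5 : Real.exp (-d * (T - T)) = 1 := by simp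
  rw [h5]
  rw [div_sub_div_same, div_le_div_iff₀ hd hd]
  nlinarith

lemma int_twoexp_le {lam₁ lam₂ t T : ℝ} (h1 : 0 < lam₁) (h2 : 0 < lam₂)
    (hne : lam₁ ≠ lam₂) (h : t ≤ T) :
    ∫ u in t..T, Real.exp (-lam₂ * (u - t)) * Real.exp (-lam₁ * (T - u))
      ≤ Real.exp (-(min lam₁ lam₂) * (T - t)) / |lam₁ - lam₂| := by
  rcases lt_or_gt_of_ne hne with hlt | hgt
  · have hd : 0 < lam₂ - lam₁ := by linarith
    have hcong : Set.EqOn (fun u => Real.exp (-lam₂ * (u - t)) * Real.exp (-lam₁ * (T - u)))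
        (fun u => Real.exp (-lam₁ * (T - t)) * Real.exp (-(lam₂ - lam₁) * (u - t)))
        (Set.uIcc t T) := by
      intro u _
      simp only [← Real.exp_add]
      ring_nf
    rw [intervalIntegral.integral_congr hcong, intervalIntegral.integral_const_mul]
    have hle := int_exp_left hd h
    have hmin : min lam₁ lam₂ = lam₁ := min_eq_left hlt.le
    have habs : |lam₁ - lam₂| = lam₂ - lam₁ := by
      rw [abs_sub_comm]; exact abs_of_pos hd
    rw [hmin, habs, div_eq_mul_one_div]
    exact mul_le_mul_of_nonneg_left hle (Real.exp_pos _).le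
  · have hd : 0 < lam₁ - lam₂ := by linarith
    have hcong : Set.EqOn (fun u => Real.exp (-lam₂ * (u - t)) * Real.exp (-lam₁ * (T - u)))
        (fun u => Real.exp (-lam₂ * (T - t)) * Real.exp (-(lam₁ - lam₂) * (T - u)))
        (Set.uIcc t T) := by
      intro u _
      simp only [← Real.exp_add]
      ring_nf
    rw [intervalIntegral.integral_congr hcong, intervalIntegral.integral_const_mul]
    have hle := int_exp_right hd h
    have hmin : min lam₁ lam₂ = lam₂ := min_eq_right hgt.le
    have habs : |lam₁ - lam₂| = lam₁ - lam₂ := abs_of_pos hd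
    rw [hmin, habs, div_eq_mul_one_div]
    exact mul_le_mul_of_nonneg_left hle (Real.exp_pos _).le

lemma mulVecL_one {k : ℕ} (x : EuclideanSpace ℝ (Fin k)) :
    mulVecL (1 : Matrix (Fin k) (Fin k) ℝ) x = x := by
  rw [eq_toEucL x, mulVecL_apply, Matrix.one_mulVec]

lemma eNorm_add_le {k : ℕ} (v w : Fin k → ℝ) : eNorm (v + w) ≤ eNorm v + eNorm w := by
  rw [eNorm_eq, eNorm_eq, eNorm_eq, map_add]
  exact norm_add_le _ _

lemma continuousOn_mulVec_comp {k l : ℕ} {s : Set ℝ} {M : ℝ → Matrix (Fin k) (Fin l) ℝ}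
    {v : ℝ → Fin l → ℝ} (hM : ∀ i j, ContinuousOn (fun u => M u i j) s)
    (hv : ∀ j, ContinuousOn (fun u => v u j) s) (i : Fin k) :
    ContinuousOn (fun u => (M u).mulVec (v u) i) s := by
  have hrw : (fun u => (M u).mulVec (v u) i) = fun u => ∑ j, M u i j * v u j := by
    funext u; simp [Matrix.mulVec, dotProduct]
  rw [hrw]
  exact continuousOn_finset_sum _ (fun j _ => (hM i j).mul (hv j))


set_option maxHeartbeats 1000000 in
/-- exponential convergence `|p(t) - p∞| ≤ K e^{-λ(T-t)}` of the solution
of the backward linear ODE for `p` towards the solution `p∞` of the corresponding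
algebraic equation, with constants `K > 0` and `λ ∈ (0, min{λ₁, λ₂}]` independent of
`T`. -/
theorem p_convergence {n m : ℕ} (hn : 0 < n) (hm : 0 < m)
    (A Abar C Cbar : Matrix (Fin n) (Fin n) ℝ)
    (B D : Matrix (Fin n) (Fin m) ℝ)
    (b sig qv : Fin n → ℝ) (rv : Fin m → ℝ)
    (K₀ lam₁ lam₂ : ℝ) (hK₀ : 0 < K₀) (hlam₁ : 0 < lam₁) (hlam₂ : 0 < lam₂)
    (hne : lam₁ ≠ lam₂)
    (Pinf Piinf : Matrix (Fin n) (Fin n) ℝ)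
    (hPinf : Pinf.IsSymm) (hPiinf : Piinf.IsSymm)
    (Thbstar : Matrix (Fin m) (Fin n) ℝ)
    -- (c) exponential stability of `A + Ā + BΘ̄*`
    (hexp : ∀ t : ℝ, 0 ≤ t →
      frobNorm (matExp (t • (A + Abar + B * Thbstar)ᵀ)) ≤ K₀ * Real.exp (-lam₂ * t))
    (pinf : Fin n → ℝ)
    -- (e) the algebraic equation for `p∞`
    (hpinf : (A + Abar + B * Thbstar)ᵀ.mulVec pinf
        + (C + Cbar + D * Thbstar)ᵀ.mulVec (Pinf.mulVec sig)
        + Thbstarᵀ.mulVec rv + Piinf.mulVec b + qv = 0) :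
    ∃ K > (0:ℝ), ∃ lam : ℝ, 0 < lam ∧ lam ≤ min lam₁ lam₂ ∧
      ∀ T : ℝ, 0 < T →
      ∀ P Pi0 : ℝ → Matrix (Fin n) (Fin n) ℝ, ∀ ThbT : ℝ → Matrix (Fin m) (Fin n) ℝ,
      ∀ p : ℝ → Fin n → ℝ,
        -- (a) continuity and uniform boundedness of `P`
        (∀ i j, ContinuousOn (fun t => P t i j) (Set.Icc 0 T)) →
        (∀ i j, ContinuousOn (fun t => Pi0 t i j) (Set.Icc 0 T)) →
        (∀ i j, ContinuousOn (fun t => ThbT t i j) (Set.Icc 0 T)) →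
        (∀ t ∈ Set.Icc (0:ℝ) T, (P t).IsSymm) →
        (∀ t ∈ Set.Icc (0:ℝ) T, (Pi0 t).IsSymm) →
        (∀ t ∈ Set.Icc (0:ℝ) T, frobNorm (P t) ≤ K₀) →
        -- (b) exponential convergence of the coefficients
        (∀ t ∈ Set.Icc (0:ℝ) T,
          frobNorm (P t - Pinf) ≤ K₀ * Real.exp (-lam₁ * (T - t))) →
        (∀ t ∈ Set.Icc (0:ℝ) T,
          frobNorm (Pi0 t - Piinf) ≤ K₀ * Real.exp (-lam₁ * (T - t))) →
        (∀ t ∈ Set.Icc (0:ℝ) T,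
          frobNorm (ThbT t - Thbstar) ≤ K₀ * Real.exp (-lam₁ * (T - t))) →
        -- (d) the backward ODE for `p`, terminal condition and uniform bound
        (∀ t ∈ Set.Icc (0:ℝ) T,
          HasDerivAt p
            (-((A + Abar + B * ThbT t)ᵀ.mulVec (p t))
              - (C + Cbar + D * ThbT t)ᵀ.mulVec ((P t).mulVec sig)
              - (ThbT t)ᵀ.mulVec rv - (Pi0 t).mulVec b - qv) t) →
        p T = 0 →
        (∀ t ∈ Set.Icc (0:ℝ) T, eNorm (p t) ≤ K₀) →
        ∀ t ∈ Set.Icc (0:ℝ) T,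
          eNorm (p t - pinf) ≤ K * Real.exp (-lam * (T - t)) := by
  classical
  set N : Matrix (Fin n) (Fin n) ℝ := (A + Abar + B * Thbstar)ᵀ with hNdef
  set lam : ℝ := min lam₁ lam₂ with hlamdef
  have hlam : 0 < lam := lt_min hlam₁ hlam₂
  set d : ℝ := |lam₁ - lam₂| with hddef
  have hdpos : 0 < d := abs_pos.2 (sub_ne_zero.2 hne)
  set C₁ : ℝ := frobNorm B * K₀ * K₀ + frobNorm D * K₀ * (K₀ * eNorm sig)
      + frobNorm (C + Cbar + D * Thbstar) * (K₀ * eNorm sig)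
      + K₀ * eNorm rv + K₀ * eNorm b with hC₁def
  have hC₁ : 0 ≤ C₁ := by
    have h1 := frobNorm_nonneg B
    have h2 := frobNorm_nonneg D
    have h3 := frobNorm_nonneg (C + Cbar + D * Thbstar)
    have h4 := eNorm_nonneg sig
    have h5 := eNorm_nonneg rv
    have h6 := eNorm_nonneg b
    have := hK₀.le
    positivity
  set K : ℝ := K₀ * eNorm pinf + K₀ * C₁ / d + 1 with hKdef
  have hKpos : 0 < K := by
    have h4 := eNorm_nonneg pinf
    positivity
  refine ⟨K, hKpos, lam, hlam, le_refl _, ?_⟩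
  intro T hT P Pi0 ThbT p hPc hPic hThc _ _ hPbound hPconv hPiconv hThconv hode hpT hpbound t ht
  obtain ⟨ht0, htT⟩ := ht
  -- the forcing term
  set F : ℝ → Fin n → ℝ := fun u =>
    -((A + Abar + B * ThbT u)ᵀ.mulVec (p u))
      - (C + Cbar + D * ThbT u)ᵀ.mulVec ((P u).mulVec sig)
      - (ThbT u)ᵀ.mulVec rv - (Pi0 u).mulVec b - qv with hFdef
  set G : ℝ → Fin n → ℝ := fun u => N.mulVec (p u - pinf) + F u with hGdef
  set w : ℝ → EuclideanSpace ℝ (Fin n) :=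
    fun u => mulVecL (NormedSpace.exp ((u - T) • N)) (toEucL (p u - pinf)) with hwdef
  set wd : ℝ → EuclideanSpace ℝ (Fin n) :=
    fun u => mulVecL (NormedSpace.exp ((u - T) • N)) (toEucL (G u)) with hwddef
  set H : ℝ → EuclideanSpace ℝ (Fin n) :=
    fun u => mulVecL (NormedSpace.exp ((u - t) • N)) (toEucL (G u)) with hHdef
  -- identity for G
  have hGid : ∀ u : ℝ, G u = ((B * (Thbstar - ThbT u))ᵀ).mulVec (p u)
      + ((D * (Thbstar - ThbT u))ᵀ).mulVec ((P u).mulVec sig)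
      + (C + Cbar + D * Thbstar)ᵀ.mulVec ((Pinf - P u).mulVec sig)
      + (Thbstar - ThbT u)ᵀ.mulVec rv
      + (Piinf - Pi0 u).mulVec b := by
    intro u
    have h := hpinf
    simp only [hGdef, hFdef, hNdef, Matrix.transpose_add, Matrix.transpose_mul,
      Matrix.transpose_sub, Matrix.add_mulVec, Matrix.sub_mulVec, Matrix.mulVec_sub,
      Matrix.mulVec_add, ← Matrix.mulVec_mulVec] at h ⊢
    linear_combination (norm := ring_nf) -h
  -- pointwise bound on G
  have hGbound : ∀ u ∈ Set.Icc (0:ℝ) T, eNorm (G u) ≤ C₁ * Real.exp (-lam₁ * (T - u)) := by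
    intro u hu
    set e : ℝ := Real.exp (-lam₁ * (T - u)) with hedef
    have hepos : 0 < e := Real.exp_pos _
    have hTh : frobNorm (Thbstar - ThbT u) ≤ K₀ * e := by
      rw [← frobNorm_neg (Thbstar - ThbT u), neg_sub]; exact hThconv u hu
    have hPi' : frobNorm (Piinf - Pi0 u) ≤ K₀ * e := by
      rw [← frobNorm_neg (Piinf - Pi0 u), neg_sub]; exact hPiconv u hu
    have hP' : frobNorm (Pinf - P u) ≤ K₀ * e := by
      rw [← frobNorm_neg (Pinf - P u), neg_sub]; exact hPconv u hu
    have hpb := hpbound u hu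
    have hPb := hPbound u hu
    have hPsig : eNorm ((P u).mulVec sig) ≤ K₀ * eNorm sig :=
      le_trans (eNorm_mulVec_le _ _) (mul_le_mul_of_nonneg_right hPb (eNorm_nonneg _))
    have h1 : eNorm (((B * (Thbstar - ThbT u))ᵀ).mulVec (p u))
        ≤ frobNorm B * K₀ * K₀ * e := by
      calc eNorm (((B * (Thbstar - ThbT u))ᵀ).mulVec (p u))
          ≤ frobNorm ((B * (Thbstar - ThbT u))ᵀ) * eNorm (p u) := eNorm_mulVec_le _ _
        _ = frobNorm (B * (Thbstar - ThbT u)) * eNorm (p u) := by rw [frobNorm_transpose]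
        _ ≤ (frobNorm B * frobNorm (Thbstar - ThbT u)) * eNorm (p u) :=
            mul_le_mul_of_nonneg_right (frobNorm_mul_le _ _) (eNorm_nonneg _)
        _ ≤ (frobNorm B * (K₀ * e)) * K₀ := by
            refine mul_le_mul (mul_le_mul_of_nonneg_left hTh (frobNorm_nonneg _)) hpb
              (eNorm_nonneg _) (mul_nonneg (frobNorm_nonneg _) (by positivity))
        _ = frobNorm B * K₀ * K₀ * e := by ring
    have h2 : eNorm (((D * (Thbstar - ThbT u))ᵀ).mulVec ((P u).mulVec sig))
        ≤ frobNorm D * K₀ * (K₀ * eNorm sig) * e := by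
      calc eNorm (((D * (Thbstar - ThbT u))ᵀ).mulVec ((P u).mulVec sig))
          ≤ frobNorm ((D * (Thbstar - ThbT u))ᵀ) * eNorm ((P u).mulVec sig) := eNorm_mulVec_le _ _
        _ = frobNorm (D * (Thbstar - ThbT u)) * eNorm ((P u).mulVec sig) := by
            rw [frobNorm_transpose]
        _ ≤ (frobNorm D * frobNorm (Thbstar - ThbT u)) * eNorm ((P u).mulVec sig) :=
            mul_le_mul_of_nonneg_right (frobNorm_mul_le _ _) (eNorm_nonneg _)
        _ ≤ (frobNorm D * (K₀ * e)) * (K₀ * eNorm sig) := by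
            refine mul_le_mul (mul_le_mul_of_nonneg_left hTh (frobNorm_nonneg _)) hPsig
              (eNorm_nonneg _) (mul_nonneg (frobNorm_nonneg _) (by positivity))
        _ = frobNorm D * K₀ * (K₀ * eNorm sig) * e := by ring
    have h3 : eNorm ((C + Cbar + D * Thbstar)ᵀ.mulVec ((Pinf - P u).mulVec sig))
        ≤ frobNorm (C + Cbar + D * Thbstar) * (K₀ * eNorm sig) * e := by
      calc eNorm ((C + Cbar + D * Thbstar)ᵀ.mulVec ((Pinf - P u).mulVec sig))
          ≤ frobNorm ((C + Cbar + D * Thbstar)ᵀ) * eNorm ((Pinf - P u).mulVec sig) :=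
            eNorm_mulVec_le _ _
        _ = frobNorm (C + Cbar + D * Thbstar) * eNorm ((Pinf - P u).mulVec sig) := by
            rw [frobNorm_transpose]
        _ ≤ frobNorm (C + Cbar + D * Thbstar) * ((K₀ * e) * eNorm sig) := by
            refine mul_le_mul_of_nonneg_left ?_ (frobNorm_nonneg _)
            exact le_trans (eNorm_mulVec_le _ _)
              (mul_le_mul_of_nonneg_right hP' (eNorm_nonneg _))
        _ = frobNorm (C + Cbar + D * Thbstar) * (K₀ * eNorm sig) * e := by ring
    have h4 : eNorm ((Thbstar - ThbT u)ᵀ.mulVec rv) ≤ K₀ * eNorm rv * e := by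
      calc eNorm ((Thbstar - ThbT u)ᵀ.mulVec rv)
          ≤ frobNorm ((Thbstar - ThbT u)ᵀ) * eNorm rv := eNorm_mulVec_le _ _
        _ = frobNorm (Thbstar - ThbT u) * eNorm rv := by rw [frobNorm_transpose]
        _ ≤ (K₀ * e) * eNorm rv := mul_le_mul_of_nonneg_right hTh (eNorm_nonneg _)
        _ = K₀ * eNorm rv * e := by ring
    have h5 : eNorm ((Piinf - Pi0 u).mulVec b) ≤ K₀ * eNorm b * e := by
      calc eNorm ((Piinf - Pi0 u).mulVec b)
          ≤ frobNorm (Piinf - Pi0 u) * eNorm b := eNorm_mulVec_le _ _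
        _ ≤ (K₀ * e) * eNorm b := mul_le_mul_of_nonneg_right hPi' (eNorm_nonneg _)
        _ = K₀ * eNorm b * e := by ring
    rw [hGid u]
    set T1 := ((B * (Thbstar - ThbT u))ᵀ).mulVec (p u) with hT1
    set T2 := ((D * (Thbstar - ThbT u))ᵀ).mulVec ((P u).mulVec sig) with hT2
    set T3 := (C + Cbar + D * Thbstar)ᵀ.mulVec ((Pinf - P u).mulVec sig) with hT3
    set T4 := (Thbstar - ThbT u)ᵀ.mulVec rv with hT4
    set T5 := (Piinf - Pi0 u).mulVec b with hT5
    have tr1 := eNorm_add_le (T1 + T2 + T3 + T4) T5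
    have tr2 := eNorm_add_le (T1 + T2 + T3) T4
    have tr3 := eNorm_add_le (T1 + T2) T3
    have tr4 := eNorm_add_le T1 T2
    have hCe : C₁ * e = frobNorm B * K₀ * K₀ * e + frobNorm D * K₀ * (K₀ * eNorm sig) * e
        + frobNorm (C + Cbar + D * Thbstar) * (K₀ * eNorm sig) * e
        + K₀ * eNorm rv * e + K₀ * eNorm b * e := by
      rw [hC₁def]; ring
    linarith
  -- derivative of w
  have hderiv : ∀ u ∈ Set.Icc (0:ℝ) T, HasDerivAt w (wd u) u := by
    intro u hu
    have hc : HasDerivAt (mulVecL ∘ (fun s : ℝ => NormedSpace.exp ((s - T) • N)))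
        (mulVecL (NormedSpace.exp ((u - T) • N) * N)) u :=
      (ContinuousLinearMap.hasFDerivAt mulVecL).comp_hasDerivAt u (expDeriv N T u)
    have hc' : HasDerivAt (fun s : ℝ => mulVecL (NormedSpace.exp ((s - T) • N)))
        (mulVecL (NormedSpace.exp ((u - T) • N) * N)) u := by
      exact hc
    have h0 : HasDerivAt (fun s => p s - pinf) (F u) u := (hode u hu).sub_const pinf
    have hp1 : HasDerivAt (toEucL ∘ (fun s => p s - pinf)) (toEucL (F u)) u :=
      (ContinuousLinearMap.hasFDerivAt toEucL).comp_hasDerivAt u h0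
    have hp' : HasDerivAt (fun s => toEucL (p s - pinf)) (toEucL (F u)) u := by
      exact hp1
    have hca := hc'.clm_apply hp'
    have heq : wd u = mulVecL (NormedSpace.exp ((u - T) • N) * N) (toEucL (p u - pinf))
        + mulVecL (NormedSpace.exp ((u - T) • N)) (toEucL (F u)) := by
      show mulVecL (NormedSpace.exp ((u - T) • N)) (toEucL (G u)) = _
      have hGu : G u = N.mulVec (p u - pinf) + F u := rfl
      have hmm : mulVecL (NormedSpace.exp ((u - T) • N) * N) (toEucL (p u - pinf))
          = mulVecL (NormedSpace.exp ((u - T) • N)) (toEucL (N.mulVec (p u - pinf))) := by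
        rw [mulVecL_mul, mulVecL_apply]
      rw [hGu, map_add, map_add, hmm]
    rw [heq]
    exact hca
  -- continuity
  have hpcon : ContinuousOn p (Set.Icc 0 T) :=
    fun u hu => (hode u hu).continuousAt.continuousWithinAt
  have hpc : ∀ j, ContinuousOn (fun u => p u j) (Set.Icc (0:ℝ) T) :=
    fun j => (continuous_apply j).comp_continuousOn hpcon
  have hGcomp : ∀ i, ContinuousOn (fun u => G u i) (Set.Icc (0:ℝ) T) := by
    intro i
    have hpd : ∀ j, ContinuousOn (fun u => (p u - pinf) j) (Set.Icc (0:ℝ) T) := by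
      intro j
      simp only [Pi.sub_apply]
      exact (hpc j).sub continuousOn_const
    have cN : ContinuousOn (fun u => N.mulVec (p u - pinf) i) (Set.Icc (0:ℝ) T) :=
      continuousOn_mulVec_comp (M := fun _ => N) (v := fun u => p u - pinf) (fun _ _ => continuousOn_const) hpd i
    have cM1 : ∀ (i j : Fin n),
        ContinuousOn (fun u => (A + Abar + B * ThbT u)ᵀ i j) (Set.Icc (0:ℝ) T) := by
      intro i j
      simp only [Matrix.transpose_apply, Matrix.add_apply, Matrix.mul_apply]
      exact (continuousOn_const.add continuousOn_const).add
        (continuousOn_finset_sum _ fun c _ => continuousOn_const.mul (hThc c i))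
    have cM2 : ∀ (i j : Fin n),
        ContinuousOn (fun u => (C + Cbar + D * ThbT u)ᵀ i j) (Set.Icc (0:ℝ) T) := by
      intro i j
      simp only [Matrix.transpose_apply, Matrix.add_apply, Matrix.mul_apply]
      exact (continuousOn_const.add continuousOn_const).add
        (continuousOn_finset_sum _ fun c _ => continuousOn_const.mul (hThc c i))
    have cPsig : ∀ j, ContinuousOn (fun u => (P u).mulVec sig j) (Set.Icc (0:ℝ) T) :=
      fun j => continuousOn_mulVec_comp (M := P) (v := fun _ => sig) hPc (fun _ => continuousOn_const) j
    have ct1 : ContinuousOn (fun u => (A + Abar + B * ThbT u)ᵀ.mulVec (p u) i)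
        (Set.Icc (0:ℝ) T) := continuousOn_mulVec_comp (M := fun u => (A + Abar + B * ThbT u)ᵀ) (v := p) cM1 hpc i
    have ct2 : ContinuousOn (fun u => (C + Cbar + D * ThbT u)ᵀ.mulVec ((P u).mulVec sig) i)
        (Set.Icc (0:ℝ) T) := continuousOn_mulVec_comp (M := fun u => (C + Cbar + D * ThbT u)ᵀ) (v := fun u => (P u).mulVec sig) cM2 cPsig i
    have cM3 : ∀ (i : Fin n) (j : Fin m),
        ContinuousOn (fun u => (ThbT u)ᵀ i j) (Set.Icc (0:ℝ) T) := by
      intro i j; simp only [Matrix.transpose_apply]; exact hThc j i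
    have ct3 : ContinuousOn (fun u => (ThbT u)ᵀ.mulVec rv i) (Set.Icc (0:ℝ) T) :=
      continuousOn_mulVec_comp (M := fun u => (ThbT u)ᵀ) (v := fun _ => rv) cM3 (fun _ => continuousOn_const) i
    have ct4 : ContinuousOn (fun u => (Pi0 u).mulVec b i) (Set.Icc (0:ℝ) T) :=
      continuousOn_mulVec_comp (M := Pi0) (v := fun _ => b) hPic (fun _ => continuousOn_const) i
    have hre : (fun u => G u i) = fun u => N.mulVec (p u - pinf) i
        + (-((A + Abar + B * ThbT u)ᵀ.mulVec (p u) i)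
          - (C + Cbar + D * ThbT u)ᵀ.mulVec ((P u).mulVec sig) i
          - (ThbT u)ᵀ.mulVec rv i - (Pi0 u).mulVec b i - qv i) := by
      funext u
      show (N.mulVec (p u - pinf) + F u) i = _
      simp only [Pi.add_apply, Pi.sub_apply, Pi.neg_apply]
      rfl
    rw [hre]
    exact cN.add (((((ct1.neg).sub ct2).sub ct3).sub ct4).sub continuousOn_const)
  have hGc : ContinuousOn (fun u => toEucL (G u)) (Set.Icc (0:ℝ) T) :=
    toEucL.continuous.comp_continuousOn (continuousOn_pi.2 hGcomp)
  have hexpc : ∀ a : ℝ, Continuous (fun u : ℝ => NormedSpace.exp ((u - a) • N)) := by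
    intro a
    rw [continuous_iff_continuousAt]
    exact fun u => (expDeriv N a u).continuousAt
  have hwdc : ContinuousOn wd (Set.Icc (0:ℝ) T) := by
    exact ContinuousOn.clm_apply
      ((mulVecL.continuous.comp (hexpc T)).continuousOn) hGc
  have hHc : ContinuousOn H (Set.Icc (0:ℝ) T) := by
    exact ContinuousOn.clm_apply
      ((mulVecL.continuous.comp (hexpc t)).continuousOn) hGc
  have hsub : Set.uIcc t T ⊆ Set.Icc (0:ℝ) T := by
    rw [Set.uIcc_of_le htT]; exact Set.Icc_subset_Icc ht0 le_rfl
  have hintwd : IntervalIntegrable wd MeasureTheory.volume t T :=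
    (hwdc.mono hsub).intervalIntegrable
  have hFTC : ∫ u in t..T, wd u = w T - w t :=
    intervalIntegral.integral_eq_sub_of_hasDerivAt (fun u hu => hderiv u (hsub hu)) hintwd
  have hwT : w T = toEucL ((0 : Fin n → ℝ) - pinf) := by
    show mulVecL (NormedSpace.exp ((T - T) • N)) (toEucL (p T - pinf)) = _
    rw [hpT, sub_self, zero_smul, NormedSpace.exp_zero, mulVecL_one]
  have hexp' : ∀ s : ℝ, 0 ≤ s →
      frobNorm (NormedSpace.exp (s • N)) ≤ K₀ * Real.exp (-lam₂ * s) :=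
    fun s hs => hexp s hs
  have hrec : toEucL (p t - pinf)
      = mulVecL (NormedSpace.exp ((T - t) • N)) (toEucL ((0 : Fin n → ℝ) - pinf))
        - ∫ u in t..T, H u := by
    have h0 : mulVecL (NormedSpace.exp ((T - t) • N)) (w t) = toEucL (p t - pinf) := by
      show mulVecL (NormedSpace.exp ((T - t) • N))
        (mulVecL (NormedSpace.exp ((t - T) • N)) (toEucL (p t - pinf))) = _
      rw [← mulVecL_mul, exp_shift]
      have he : (T - t) + (t - T) = 0 := by ring
      rw [he, zero_smul, NormedSpace.exp_zero, mulVecL_one]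
    have h1 : w t = toEucL ((0 : Fin n → ℝ) - pinf) - ∫ u in t..T, wd u := by
      have h6 := hFTC
      rw [hwT] at h6
      rw [eq_sub_iff_add_eq, h6]
      abel
    have h2 : mulVecL (NormedSpace.exp ((T - t) • N)) (∫ u in t..T, wd u)
        = ∫ u in t..T, H u := by
      rw [← ContinuousLinearMap.intervalIntegral_comp_comm _ hintwd]
      apply intervalIntegral.integral_congr
      intro u _
      show mulVecL (NormedSpace.exp ((T - t) • N))
            (mulVecL (NormedSpace.exp ((u - T) • N)) (toEucL (G u)))
        = mulVecL (NormedSpace.exp ((u - t) • N)) (toEucL (G u))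
      rw [← mulVecL_mul, exp_shift]
      have he : (T - t) + (u - T) = u - t := by ring
      rw [he]
    rw [← h0, h1, map_sub, h2]
  have key : ‖toEucL (p t - pinf)‖ ≤ K₀ * Real.exp (-lam₂ * (T - t)) * eNorm pinf
      + (K₀ * C₁) * (Real.exp (-lam * (T - t)) / d) := by
    rw [hrec]
    refine le_trans (norm_sub_le _ _) (add_le_add ?_ ?_)
    · refine le_trans (norm_mulVecL_le _ _) ?_
      rw [← eNorm_eq]
      have h5 : eNorm ((0 : Fin n → ℝ) - pinf) = eNorm pinf := by
        rw [zero_sub, eNorm_neg]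
      rw [h5]
      exact mul_le_mul_of_nonneg_right (hexp' (T - t) (by linarith)) (eNorm_nonneg _)
    · refine le_trans (intervalIntegral.norm_integral_le_integral_norm htT) ?_
      have hmono : (∫ u in t..T, ‖H u‖)
          ≤ ∫ u in t..T,
            (K₀ * C₁) * (Real.exp (-lam₂ * (u - t)) * Real.exp (-lam₁ * (T - u))) := by
        apply intervalIntegral.integral_mono_on htT
        · exact ((hHc.mono hsub).norm).intervalIntegrable
        · refine Continuous.intervalIntegrable ?_ t T
          exact continuous_const.mul
            ((Real.continuous_exp.comp (continuous_const.mul (continuous_id.sub continuous_const))).mul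
             (Real.continuous_exp.comp (continuous_const.mul (continuous_const.sub continuous_id))))
        · intro u hu
          have hu' : u ∈ Set.Icc (0:ℝ) T := ⟨le_trans ht0 hu.1, hu.2⟩
          have hH1 : ‖H u‖ ≤ frobNorm (NormedSpace.exp ((u - t) • N)) * eNorm (G u) := by
            rw [eNorm_eq]
            exact norm_mulVecL_le _ _
          have hH2 := hexp' (u - t) (by linarith [hu.1])
          have hH3 := hGbound u hu'
          calc ‖H u‖ ≤ frobNorm (NormedSpace.exp ((u - t) • N)) * eNorm (G u) := hH1
            _ ≤ (K₀ * Real.exp (-lam₂ * (u - t))) * (C₁ * Real.exp (-lam₁ * (T - u))) :=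
                mul_le_mul hH2 hH3 (eNorm_nonneg _) (by positivity)
            _ = (K₀ * C₁) * (Real.exp (-lam₂ * (u - t)) * Real.exp (-lam₁ * (T - u))) := by
                ring
      refine le_trans hmono ?_
      rw [intervalIntegral.integral_const_mul]
      refine mul_le_mul_of_nonneg_left ?_ (by positivity)
      exact int_twoexp_le hlam₁ hlam₂ hne htT
  rw [eNorm_eq]
  refine le_trans key ?_
  have hexp_le : Real.exp (-lam₂ * (T - t)) ≤ Real.exp (-lam * (T - t)) := by
    apply Real.exp_le_exp.2
    have hml : lam ≤ lam₂ := min_le_right _ _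
    nlinarith
  have heposf : 0 < Real.exp (-lam * (T - t)) := Real.exp_pos _
  have hfin1 : K₀ * Real.exp (-lam₂ * (T - t)) * eNorm pinf
      ≤ K₀ * eNorm pinf * Real.exp (-lam * (T - t)) := by
    have h6 := eNorm_nonneg pinf
    have h7 := mul_le_mul_of_nonneg_left hexp_le (mul_nonneg hK₀.le h6)
    nlinarith
  have hKe : K * Real.exp (-lam * (T - t))
      = K₀ * eNorm pinf * Real.exp (-lam * (T - t))
        + (K₀ * C₁) * (Real.exp (-lam * (T - t)) / d)
        + Real.exp (-lam * (T - t)) := by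
    rw [hKdef]
    field_simp
  linarith
end
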